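/- arXiv:1312.7068 — 7 statements merged into one kernel-verified Lean document; each statement's English description precedes it below -/
import Mathlib

section
/- Let N ≥ 1 and let σ, τ ∈ (N, ∞) be real numbers, and set μ = min{σ, τ}. Then the supremum over y ∈ ℝ^N of |y|^μ · ∫_{ℝ^N} (1+|x|)^{-σ} (1+|x−y|)^{-τ} dx is finite. -/
open Real Filter MeasureTheory Metric Set

theorem stmt0 (N : ℕ) (hN : 1 ≤ N) (σ τ : ℝ) (hσ : (N : ℝ) < σ) (hτ : (N : ℝ) < τ) :
    ∃ C : ℝ, ∀ y : EuclideanSpace ℝ (Fin N),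
      ‖y‖ ^ (min σ τ) *
        ∫ x : EuclideanSpace ℝ (Fin N), (1 + ‖x‖) ^ (-σ) * (1 + ‖x - y‖) ^ (-τ) ≤ C := by
  set μ := min σ τ with hμdef
  have hNσ : (Module.finrank ℝ (EuclideanSpace ℝ (Fin N)) : ℝ) < σ := by
    simpa using hσ
  have hNτ : (Module.finrank ℝ (EuclideanSpace ℝ (Fin N)) : ℝ) < τ := by
    simpa using hτ
  have hσ0 : 0 < σ := lt_of_le_of_lt (by positivity) hσ
  have hτ0 : 0 < τ := lt_of_le_of_lt (by positivity) hτ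
  have hμ0 : 0 < μ := lt_min hσ0 hτ0
  have hμσ : μ ≤ σ := min_le_left _ _
  have hμτ : μ ≤ τ := min_le_right _ _
  have hIσ : Integrable (fun x : EuclideanSpace ℝ (Fin N) => (1 + ‖x‖) ^ (-σ)) :=
    integrable_one_add_norm hNσ
  have hIτ : Integrable (fun x : EuclideanSpace ℝ (Fin N) => (1 + ‖x‖) ^ (-τ)) :=
    integrable_one_add_norm hNτ
  set Aσ := ∫ x : EuclideanSpace ℝ (Fin N), (1 + ‖x‖) ^ (-σ) with hAσ
  set Aτ := ∫ x : EuclideanSpace ℝ (Fin N), (1 + ‖x‖) ^ (-τ) with hAτ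
  have hAσ0 : 0 ≤ Aσ := integral_nonneg fun x => by positivity
  have hAτ0 : 0 ≤ Aτ := integral_nonneg fun x => by positivity
  refine ⟨2 ^ μ * (Aσ + Aτ), fun y => ?_⟩
  set b : ℝ := 1 + ‖y‖ / 2 with hb
  have hb1 : (1 : ℝ) ≤ b := by
    have := norm_nonneg y; simp [hb]; positivity
  have hb0 : 0 < b := lt_of_lt_of_le one_pos hb1
  -- pointwise bound
  have hpt : ∀ x : EuclideanSpace ℝ (Fin N),
      (1 + ‖x‖) ^ (-σ) * (1 + ‖x - y‖) ^ (-τ) ≤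
        b ^ (-μ) * ((1 + ‖x‖) ^ (-σ) + (1 + ‖x - y‖) ^ (-τ)) := by
    intro x
    have hx1 : (1 : ℝ) ≤ 1 + ‖x‖ := by have := norm_nonneg x; linarith
    have hxy1 : (1 : ℝ) ≤ 1 + ‖x - y‖ := by have := norm_nonneg (x - y); linarith
    have htriangle : ‖y‖ ≤ ‖x‖ + ‖x - y‖ := by
      have : y = x - (x - y) := by abel
      calc ‖y‖ = ‖x - (x - y)‖ := by rw [← this]
        _ ≤ ‖x‖ + ‖x - y‖ := norm_sub_le _ _
    rcases le_or_gt (‖y‖ / 2) ‖x‖ with hcase | hcase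
    · have h1 : (1 + ‖x‖) ^ (-σ) ≤ b ^ (-μ) := by
        calc (1 + ‖x‖) ^ (-σ) ≤ (1 + ‖x‖) ^ (-μ) :=
              rpow_le_rpow_of_exponent_le hx1 (by linarith)
          _ ≤ b ^ (-μ) := by
              apply rpow_le_rpow_of_nonpos hb0 (by simp [hb]; linarith) (by linarith)
      calc (1 + ‖x‖) ^ (-σ) * (1 + ‖x - y‖) ^ (-τ)
          ≤ b ^ (-μ) * (1 + ‖x - y‖) ^ (-τ) := by
            apply mul_le_mul_of_nonneg_right h1 (by positivity)
        _ ≤ b ^ (-μ) * ((1 + ‖x‖) ^ (-σ) + (1 + ‖x - y‖) ^ (-τ)) := by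
            apply mul_le_mul_of_nonneg_left _ (by positivity)
            nlinarith [rpow_nonneg (le_trans zero_le_one hx1) (-σ)]
    · have hcase2 : ‖y‖ / 2 ≤ ‖x - y‖ := by linarith
      have h1 : (1 + ‖x - y‖) ^ (-τ) ≤ b ^ (-μ) := by
        calc (1 + ‖x - y‖) ^ (-τ) ≤ (1 + ‖x - y‖) ^ (-μ) :=
              rpow_le_rpow_of_exponent_le hxy1 (by linarith)
          _ ≤ b ^ (-μ) := by
              apply rpow_le_rpow_of_nonpos hb0 (by simp [hb]; linarith) (by linarith)
      calc (1 + ‖x‖) ^ (-σ) * (1 + ‖x - y‖) ^ (-τ)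
          ≤ (1 + ‖x‖) ^ (-σ) * b ^ (-μ) := by
            apply mul_le_mul_of_nonneg_left h1 (by positivity)
        _ = b ^ (-μ) * (1 + ‖x‖) ^ (-σ) := mul_comm _ _
        _ ≤ b ^ (-μ) * ((1 + ‖x‖) ^ (-σ) + (1 + ‖x - y‖) ^ (-τ)) := by
            apply mul_le_mul_of_nonneg_left _ (by positivity)
            nlinarith [rpow_nonneg (le_trans zero_le_one hxy1) (-τ)]
  have hIτy : Integrable (fun x : EuclideanSpace ℝ (Fin N) => (1 + ‖x - y‖) ^ (-τ)) :=
    hIτ.comp_sub_right y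
  have hdom : Integrable (fun x : EuclideanSpace ℝ (Fin N) =>
      b ^ (-μ) * ((1 + ‖x‖) ^ (-σ) + (1 + ‖x - y‖) ^ (-τ))) :=
    ((hIσ.add hIτy).const_mul _)
  have hint : (∫ x : EuclideanSpace ℝ (Fin N), (1 + ‖x‖) ^ (-σ) * (1 + ‖x - y‖) ^ (-τ)) ≤
      b ^ (-μ) * (Aσ + Aτ) := by
    have := integral_mono_of_nonneg (f := fun x : EuclideanSpace ℝ (Fin N) =>
        (1 + ‖x‖) ^ (-σ) * (1 + ‖x - y‖) ^ (-τ))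
      (Eventually.of_forall fun x => by positivity) hdom (Eventually.of_forall hpt)
    refine this.trans_eq ?_
    rw [integral_const_mul, integral_add hIσ hIτy]
    congr 2
    exact integral_sub_right_eq_self (fun x : EuclideanSpace ℝ (Fin N) => (1 + ‖x‖) ^ (-τ)) y
  have hintnn : 0 ≤ ∫ x : EuclideanSpace ℝ (Fin N), (1 + ‖x‖) ^ (-σ) * (1 + ‖x - y‖) ^ (-τ) :=
    integral_nonneg fun x => by positivity
  have key : ‖y‖ ^ μ * b ^ (-μ) ≤ 2 ^ μ := by
    rw [rpow_neg hb0.le, ← div_eq_mul_inv, ← div_rpow (norm_nonneg y) hb0.le]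
    apply rpow_le_rpow (by positivity) _ hμ0.le
    rw [div_le_iff₀ hb0]
    simp [hb]; linarith [norm_nonneg y]
  calc ‖y‖ ^ μ * ∫ x : EuclideanSpace ℝ (Fin N), (1 + ‖x‖) ^ (-σ) * (1 + ‖x - y‖) ^ (-τ)
      ≤ ‖y‖ ^ μ * (b ^ (-μ) * (Aσ + Aτ)) :=
        mul_le_mul_of_nonneg_left hint (by positivity)
    _ = ‖y‖ ^ μ * b ^ (-μ) * (Aσ + Aτ) := by ring
    _ ≤ 2 ^ μ * (Aσ + Aτ) := mul_le_mul_of_nonneg_right key (by positivity)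
end

section
/- For every p > 2 there exists a constant C = C(p) > 0 such that for all a, b ≥ 0, (a+b)^p ≥ a^p + b^p + p(a^{p-1} b + a b^{p-1}) − C a^{p/2} b^{p/2}. -/
open Real

lemma key_aux (p : ℝ) (hp : 2 < p) (a b : ℝ) (ha : 0 ≤ a) (hb : 0 ≤ b) (hab : a ≤ b) :
    a ^ p + b ^ p + p * (a ^ (p - 1) * b + a * b ^ (p - 1)) - (p + 1) * a ^ (p / 2) * b ^ (p / 2)
      ≤ (a + b) ^ p := by
  have hp0 : (0:ℝ) < p := by linarith
  rcases eq_or_lt_of_le ha with h0 | ha'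
  · have ha0 : a = 0 := h0.symm
    subst ha0
    rw [Real.zero_rpow (by positivity), Real.zero_rpow (by linarith : p - 1 ≠ 0),
      Real.zero_rpow (by positivity : p / 2 ≠ 0)]
    simp
  have hb' : 0 < b := lt_of_lt_of_le ha' hab
  -- Bernoulli: (a+b)^p ≥ b^p + p * a * b^(p-1)
  have h3 : b ^ p + p * (a * b ^ (p - 1)) ≤ (a + b) ^ p := by
    have hdiv : (0:ℝ) ≤ a / b := by positivity
    have hber := one_add_mul_self_le_rpow_one_add
      (by linarith : (-1:ℝ) ≤ a / b) (by linarith : (1:ℝ) ≤ p)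
    have h1ab : (1 : ℝ) + a / b = (a + b) / b := by field_simp; ring
    rw [h1ab, Real.div_rpow (by positivity) hb'.le] at hber
    have hbp : (0:ℝ) < b ^ p := Real.rpow_pos_of_pos hb' p
    have hkey : (1 + p * (a / b)) * b ^ p ≤ (a + b) ^ p := by
      have := mul_le_mul_of_nonneg_right hber hbp.le
      calc (1 + p * (a / b)) * b ^ p ≤ (a + b) ^ p / b ^ p * b ^ p := this
        _ = (a + b) ^ p := by field_simp
    have hbpm : b ^ (p - 1) = b ^ p / b := by
      rw [Real.rpow_sub hb', Real.rpow_one]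
    rw [hbpm]
    calc b ^ p + p * (a * (b ^ p / b)) = (1 + p * (a / b)) * b ^ p := by field_simp
      _ ≤ (a + b) ^ p := hkey
  -- a^p ≤ a^(p/2) * b^(p/2)
  have hhalf : a ^ (p / 2) ≤ b ^ (p / 2) :=
    Real.rpow_le_rpow ha'.le hab (by positivity)
  have h1 : a ^ p ≤ a ^ (p / 2) * b ^ (p / 2) := by
    have : a ^ p = a ^ (p / 2) * a ^ (p / 2) := by
      rw [← Real.rpow_add ha']; ring_nf
    rw [this]
    exact mul_le_mul_of_nonneg_left hhalf (Real.rpow_nonneg ha _)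
  -- a^(p-1) * b ≤ a^(p/2) * b^(p/2)
  have h2 : a ^ (p - 1) * b ≤ a ^ (p / 2) * b ^ (p / 2) := by
    have e1 : a ^ (p - 1) = a ^ (p / 2) * a ^ (p / 2 - 1) := by
      rw [← Real.rpow_add ha']; ring_nf
    have e2 : b ^ (p / 2) = b ^ (p / 2 - 1) * b := by
      nth_rewrite 3 [← Real.rpow_one b]
      rw [← Real.rpow_add hb']
      congr 1; ring
    have hm : a ^ (p / 2 - 1) ≤ b ^ (p / 2 - 1) :=
      Real.rpow_le_rpow ha'.le hab (by linarith)
    rw [e1, e2]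
    have : a ^ (p / 2 - 1) * b ≤ b ^ (p / 2 - 1) * b :=
      mul_le_mul_of_nonneg_right hm hb'.le
    calc a ^ (p / 2) * a ^ (p / 2 - 1) * b = a ^ (p / 2) * (a ^ (p / 2 - 1) * b) := by ring
      _ ≤ a ^ (p / 2) * (b ^ (p / 2 - 1) * b) :=
          mul_le_mul_of_nonneg_left this (Real.rpow_nonneg ha _)
  nlinarith [mul_le_mul_of_nonneg_left h2 hp0.le]

theorem stmt1 (p : ℝ) (hp : 2 < p) :
    ∃ C > 0, ∀ a b : ℝ, 0 ≤ a → 0 ≤ b →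
      a ^ p + b ^ p + p * (a ^ (p - 1) * b + a * b ^ (p - 1)) - C * a ^ (p / 2) * b ^ (p / 2)
        ≤ (a + b) ^ p := by
  refine ⟨p + 1, by linarith, fun a b ha hb => ?_⟩
  rcases le_total a b with hab | hab
  · exact key_aux p hp a b ha hb hab
  · have := key_aux p hp b a hb ha hab
    rw [add_comm b a] at this
    linarith [this]
end

section
/- Suppose u : ℝ^N → ℝ satisfies C₁/(1+|x|^{N+2s}) ≤ u(x) ≤ C₂/(1+|x|^{N+2s}) for all x, with constants 0 < C₁ < C₂ and 0 < s < 1. Let p > 2 and for y, z ∈ ℝ^N define A_{y,z} = ∫_{ℝ^N} u(x−y)^{p-1} u(x−z) dx. Then there exist constants ζ₁, ζ₂ > 0 such that ζ₁ |z−y|^{-(N+2s)} ≤ A_{y,z} ≤ ζ₂ |z−y|^{-(N+2s)} for all y, z with |z−y| > 1. -/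
open Real MeasureTheory Metric

lemma key_rpow (r q : ℝ) (hr : 0 < r) (hq : 0 < q) (a : ℝ) (ha : 0 ≤ a) :
    (1 + a) ^ (r * q) ≤ 2 ^ (r * q) * (1 + a ^ r) ^ q := by
  have har : 0 ≤ a ^ r := rpow_nonneg ha r
  have h1 : (1 + a) ^ r ≤ 2 ^ r * (1 + a ^ r) := by
    rcases le_total a 1 with h | h
    · calc (1 + a) ^ r ≤ 2 ^ r := rpow_le_rpow (by positivity) (by linarith) hr.le
        _ ≤ 2 ^ r * (1 + a ^ r) := le_mul_of_one_le_right (by positivity) (by linarith)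
    · calc (1 + a) ^ r ≤ (2 * a) ^ r := rpow_le_rpow (by positivity) (by linarith) hr.le
        _ = 2 ^ r * a ^ r := mul_rpow (by norm_num) ha
        _ ≤ 2 ^ r * (1 + a ^ r) := by
            have : (0:ℝ) < 2 ^ r := rpow_pos_of_pos two_pos r
            nlinarith
  calc (1 + a) ^ (r * q) = ((1 + a) ^ r) ^ q := rpow_mul (by linarith) r q
    _ ≤ (2 ^ r * (1 + a ^ r)) ^ q := rpow_le_rpow (by positivity) h1 hq.le
    _ = (2 ^ r) ^ q * (1 + a ^ r) ^ q := mul_rpow (by positivity) (by positivity)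
    _ = 2 ^ (r * q) * (1 + a ^ r) ^ q := by rw [← rpow_mul (by norm_num : (0:ℝ) ≤ 2)]

lemma aux_integrable (N : ℕ) (r q : ℝ) (hr : 0 < r) (hq : 0 < q) (hqr : (N : ℝ) < r * q) :
    Integrable (fun x : EuclideanSpace ℝ (Fin N) => ((1 + ‖x‖ ^ r)⁻¹) ^ q) := by
  have hbase : Integrable (fun x : EuclideanSpace ℝ (Fin N) => (1 + ‖x‖) ^ (-(r * q))) :=
    integrable_one_add_norm (by simpa using hqr)
  refine (hbase.const_mul (2 ^ (r * q))).mono ?_ ?_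
  · refine Measurable.aestronglyMeasurable ?_
    fun_prop
  · refine Filter.Eventually.of_forall fun x => ?_
    have hx : (0:ℝ) ≤ ‖x‖ := norm_nonneg x
    have hX : (0:ℝ) < 1 + ‖x‖ ^ r := by positivity
    have hY : (0:ℝ) < (1 + ‖x‖) ^ (r * q) := rpow_pos_of_pos (by linarith) _
    have key := key_rpow r q hr hq ‖x‖ hx
    have h1 : ((1 + ‖x‖ ^ r)⁻¹) ^ q = ((1 + ‖x‖ ^ r) ^ q)⁻¹ := inv_rpow hX.le q
    have h2 : (1 + ‖x‖) ^ (-(r * q)) = ((1 + ‖x‖) ^ (r * q))⁻¹ := rpow_neg (by linarith) _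
    have hXq : (0:ℝ) < (1 + ‖x‖ ^ r) ^ q := rpow_pos_of_pos hX q
    have main : ((1 + ‖x‖ ^ r) ^ q)⁻¹ ≤ 2 ^ (r * q) * ((1 + ‖x‖) ^ (r * q))⁻¹ := by
      rw [inv_eq_one_div, inv_eq_one_div, mul_one_div, div_le_div_iff₀ hXq hY]
      linarith
    rw [norm_of_nonneg (by positivity), norm_of_nonneg (by positivity), h1, h2]
    exact main

theorem stmt3 (N : ℕ) (hN : 1 ≤ N) (s p C₁ C₂ : ℝ) (hs0 : 0 < s) (hs1 : s < 1)
    (hp : 2 < p) (hC1 : 0 < C₁) (hC12 : C₁ < C₂)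
    (u : EuclideanSpace ℝ (Fin N) → ℝ) (hmeas : Measurable u)
    (hlow : ∀ x, C₁ / (1 + ‖x‖ ^ ((N : ℝ) + 2 * s)) ≤ u x)
    (hupp : ∀ x, u x ≤ C₂ / (1 + ‖x‖ ^ ((N : ℝ) + 2 * s))) :
    ∃ ζ₁ > (0 : ℝ), ∃ ζ₂ > (0 : ℝ), ∀ y z : EuclideanSpace ℝ (Fin N), 1 < ‖z - y‖ →
      ζ₁ * ‖z - y‖ ^ (-((N : ℝ) + 2 * s)) ≤ (∫ x, u (x - y) ^ (p - 1) * u (x - z)) ∧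
      (∫ x, u (x - y) ^ (p - 1) * u (x - z)) ≤ ζ₂ * ‖z - y‖ ^ (-((N : ℝ) + 2 * s)) := by
  set r : ℝ := (N : ℝ) + 2 * s with hrdef
  have hN1 : (1:ℝ) ≤ (N:ℝ) := by exact_mod_cast hN
  have hr : 0 < r := by rw [hrdef]; linarith
  have hNr : (N : ℝ) < r := by rw [hrdef]; linarith
  have hp1 : (1:ℝ) < p - 1 := by linarith
  have hC2 : 0 < C₂ := lt_trans hC1 hC12
  have hupos : ∀ x, 0 < u x := fun x => lt_of_lt_of_le (by positivity) (hlow x)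
  set g : EuclideanSpace ℝ (Fin N) → ℝ := fun x => C₂ / (1 + ‖x‖ ^ r) with hgdef
  have hgpos : ∀ x, 0 < g x := fun x => by rw [hgdef]; positivity
  have hgle : ∀ x, g x ≤ C₂ := fun x => by
    rw [hgdef]
    exact div_le_self hC2.le (le_add_of_nonneg_right (rpow_nonneg (norm_nonneg x) r))
  have hint_g : Integrable g := by
    have h := (aux_integrable N r 1 hr one_pos (by simpa using hNr)).const_mul C₂
    have : g = fun x => C₂ * ((1 + ‖x‖ ^ r)⁻¹) ^ (1:ℝ) := by
      funext x; simp [hgdef, rpow_one, div_eq_mul_inv]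
    rw [this]; exact h
  have hint_gp : Integrable (fun x => g x ^ (p - 1)) := by
    have h := (aux_integrable N r (p - 1) hr (by linarith) (by nlinarith)).const_mul (C₂ ^ (p - 1))
    have : (fun x => g x ^ (p - 1))
        = fun x => C₂ ^ (p - 1) * ((1 + ‖x‖ ^ r)⁻¹) ^ (p - 1) := by
      funext x
      simp only [hgdef, div_eq_mul_inv]
      exact mul_rpow hC2.le (by positivity)
    rw [this]; exact h
  have hmsub : ∀ w : EuclideanSpace ℝ (Fin N), Measurable (fun x => x - w) :=
    fun w => measurable_id.sub measurable_const
  have hint_u : ∀ w, Integrable (fun x => u (x - w)) := by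
    intro w
    refine (hint_g.comp_sub_right w).mono
      (Measurable.aestronglyMeasurable (hmeas.comp (hmsub w)))
      (Filter.Eventually.of_forall fun x => ?_)
    rw [norm_of_nonneg (hupos _).le, norm_of_nonneg (hgpos _).le]
    exact hupp _
  have hint_up : ∀ w, Integrable (fun x => u (x - w) ^ (p - 1)) := by
    intro w
    refine (hint_gp.comp_sub_right w).mono
      (Measurable.aestronglyMeasurable (by fun_prop))
      (Filter.Eventually.of_forall fun x => ?_)
    rw [norm_of_nonneg (rpow_nonneg (hupos _).le _),
      norm_of_nonneg (rpow_nonneg (hgpos _).le _)]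
    exact rpow_le_rpow (hupos _).le (hupp _) (by linarith)
  set I : ℝ := ∫ x, g x with hI
  set J : ℝ := ∫ x, g x ^ (p - 1) with hJ
  have hI0 : 0 ≤ I := integral_nonneg fun x => (hgpos x).le
  have hJ0 : 0 ≤ J := integral_nonneg fun x => rpow_nonneg (hgpos x).le _
  have hIu : ∀ w, (∫ x, u (x - w)) ≤ I := by
    intro w
    calc (∫ x, u (x - w)) ≤ ∫ x, g (x - w) :=
          integral_mono (hint_u w) (hint_g.comp_sub_right w) fun x => hupp _
      _ = I := integral_sub_right_eq_self g w
  have hJu : ∀ w, (∫ x, u (x - w) ^ (p - 1)) ≤ J := by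
    intro w
    calc (∫ x, u (x - w) ^ (p - 1)) ≤ ∫ x, g (x - w) ^ (p - 1) :=
          integral_mono (hint_up w) (hint_gp.comp_sub_right w)
            (fun x => rpow_le_rpow (hupos _).le (hupp _) (by linarith))
      _ = J := integral_sub_right_eq_self (fun x => g x ^ (p - 1)) w
  set K : ℝ := (C₂ * 2 ^ r) ^ (p - 1) with hK
  have hK0 : 0 < K := rpow_pos_of_pos (by positivity) _
  set V : ℝ := (volume (ball (0 : EuclideanSpace ℝ (Fin N)) 1)).toReal with hV
  have hV0 : 0 < V := by
    rw [hV]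
    exact ENNReal.toReal_pos (measure_ball_pos volume _ one_pos).ne' measure_ball_lt_top.ne
  set c₁ : ℝ := (C₁ / 2) ^ (p - 1) * (C₁ / (2 * 2 ^ r)) with hc₁
  have hc₁0 : 0 < c₁ := by rw [hc₁]; positivity
  refine ⟨c₁ * V, by positivity, K * I + C₂ * 2 ^ r * J + 1, ?_, ?_⟩
  · have h1 : 0 ≤ K * I := mul_nonneg hK0.le hI0
    have h2 : 0 ≤ C₂ * 2 ^ r * J := mul_nonneg (by positivity) hJ0
    linarith
  intro y z hR
  set R : ℝ := ‖z - y‖ with hRdef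
  have hR0 : 0 < R := lt_trans one_pos hR
  have hRr : 0 < R ^ (-r) := rpow_pos_of_pos hR0 _
  set f : EuclideanSpace ℝ (Fin N) → ℝ := fun x => u (x - y) ^ (p - 1) * u (x - z) with hfdef
  have hfmeas : Measurable f := by fun_prop
  have hfnn : ∀ x, 0 ≤ f x := fun x => mul_nonneg (rpow_nonneg (hupos _).le _) (hupos _).le
  have hfint : Integrable f := by
    refine ((hint_gp.comp_sub_right y).const_mul C₂).mono hfmeas.aestronglyMeasurable
      (Filter.Eventually.of_forall fun x => ?_)
    rw [norm_of_nonneg (hfnn x), norm_of_nonneg (by positivity :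
      (0:ℝ) ≤ C₂ * g (x - y) ^ (p - 1))]
    rw [hfdef]
    calc u (x - y) ^ (p - 1) * u (x - z) ≤ g (x - y) ^ (p - 1) * C₂ := by
          apply mul_le_mul (rpow_le_rpow (hupos _).le (hupp _) (by linarith))
            ((hupp _).trans (hgle _)) (hupos _).le (rpow_nonneg (hgpos _).le _)
      _ = C₂ * g (x - y) ^ (p - 1) := mul_comm _ _
  -- the key decay estimate
  have hdecay : ∀ w : EuclideanSpace ℝ (Fin N), R / 2 ≤ ‖w‖ → u w ≤ C₂ * 2 ^ r * R ^ (-r) := by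
    intro w hw
    have hR2 : (0:ℝ) < R / 2 := by linarith
    have hden : (R / 2) ^ r ≤ 1 + ‖w‖ ^ r := by
      have := rpow_le_rpow hR2.le hw hr.le
      linarith
    have h1 : u w ≤ C₂ / (R / 2) ^ r :=
      (hupp _).trans (div_le_div_of_nonneg_left hC2.le (rpow_pos_of_pos hR2 _) hden)
    have h2 : C₂ / (R / 2) ^ r = C₂ * 2 ^ r * R ^ (-r) := by
      rw [div_rpow hR0.le (by norm_num : (0:ℝ) ≤ 2), div_div_eq_mul_div, rpow_neg hR0.le,
        div_eq_mul_inv]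
    linarith [h1, h2.le]
  constructor
  · -- lower bound
    have hball : ∀ x ∈ ball y 1, c₁ * R ^ (-r) ≤ f x := by
      intro x hx
      have hx1 : ‖x - y‖ < 1 := by rwa [mem_ball_iff_norm] at hx
      have h1 : (C₁ / 2) ^ (p - 1) ≤ u (x - y) ^ (p - 1) := by
        refine rpow_le_rpow (by positivity) ?_ (by linarith)
        have hn : ‖x - y‖ ^ r ≤ 1 := by
          rcases eq_or_lt_of_le (norm_nonneg (x - y)) with h | h
          · rw [← h, zero_rpow hr.ne']; norm_num
          · calc ‖x - y‖ ^ r ≤ 1 ^ r := rpow_le_rpow (norm_nonneg _) hx1.le hr.le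
              _ = 1 := one_rpow r
        calc C₁ / 2 ≤ C₁ / (1 + ‖x - y‖ ^ r) :=
              div_le_div_of_nonneg_left hC1.le (by positivity) (by linarith)
          _ ≤ u (x - y) := hlow _
      have h2 : C₁ / (2 * 2 ^ r) * R ^ (-r) ≤ u (x - z) := by
        have hxz : ‖x - z‖ ≤ 2 * R := by
          have he : x - z = (x - y) - (z - y) := by abel
          rw [he]
          calc ‖(x - y) - (z - y)‖ ≤ ‖x - y‖ + ‖z - y‖ := norm_sub_le _ _
            _ ≤ 2 * R := by rw [← hRdef]; linarith
        have h2R : (1:ℝ) ≤ (2 * R) ^ r := by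
          have := rpow_le_rpow zero_le_one (show (1:ℝ) ≤ 2 * R by linarith) hr.le
          rwa [one_rpow] at this
        have hxzr : ‖x - z‖ ^ r ≤ (2 * R) ^ r := rpow_le_rpow (norm_nonneg _) hxz hr.le
        have hd : 1 + ‖x - z‖ ^ r ≤ 2 * (2 * R) ^ r := by linarith
        have heq : C₁ / (2 * 2 ^ r) * R ^ (-r) = C₁ / (2 * (2 * R) ^ r) := by
          have hden : (2:ℝ) * (2 * R) ^ r = 2 * 2 ^ r * R ^ r := by
            rw [mul_rpow (by norm_num : (0:ℝ) ≤ 2) hR0.le]; ring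
          rw [hden, rpow_neg hR0.le, ← div_div, div_eq_mul_inv]
          field_simp
        calc C₁ / (2 * 2 ^ r) * R ^ (-r) = C₁ / (2 * (2 * R) ^ r) := heq
          _ ≤ C₁ / (1 + ‖x - z‖ ^ r) :=
              div_le_div_of_nonneg_left hC1.le (by positivity) hd
          _ ≤ u (x - z) := hlow _
      calc c₁ * R ^ (-r) = (C₁ / 2) ^ (p - 1) * (C₁ / (2 * 2 ^ r) * R ^ (-r)) := by
            rw [hc₁]; ring
        _ ≤ u (x - y) ^ (p - 1) * u (x - z) :=
            mul_le_mul h1 h2 (by positivity) (rpow_nonneg (hupos _).le _)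
        _ = f x := rfl
    have hstep : (c₁ * R ^ (-r)) * (volume (ball y 1)).toReal ≤ ∫ x in ball y 1, f x :=
      setIntegral_ge_of_const_le_real measurableSet_ball measure_ball_lt_top.ne hball
        hfint.integrableOn
    have hsub : (∫ x in ball y 1, f x) ≤ ∫ x, f x :=
      setIntegral_le_integral hfint (Filter.Eventually.of_forall hfnn)
    calc c₁ * V * R ^ (-r) = (c₁ * R ^ (-r)) * (volume (ball y 1)).toReal := by
          rw [hV, show volume (ball y (1:ℝ)) = volume (ball (0 : EuclideanSpace ℝ (Fin N)) 1) from
            Measure.addHaar_ball_center volume y 1]; ring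
      _ ≤ ∫ x in ball y 1, f x := hstep
      _ ≤ ∫ x, f x := hsub
  · -- upper bound
    set A : Set (EuclideanSpace ℝ (Fin N)) := {x | R / 2 ≤ ‖x - y‖} with hA
    have hAmeas : MeasurableSet A :=
      measurableSet_le measurable_const ((hmsub y).norm)
    have hup_bound : ∀ x ∈ A, f x ≤ (K * R ^ (-r)) * u (x - z) := by
      intro x hx
      have h1 : u (x - y) ≤ C₂ * 2 ^ r * R ^ (-r) := hdecay _ hx
      have h2 : u (x - y) ^ (p - 1) ≤ K * R ^ (-r) := by
        calc u (x - y) ^ (p - 1) ≤ (C₂ * 2 ^ r * R ^ (-r)) ^ (p - 1) :=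
              rpow_le_rpow (hupos _).le h1 (by linarith)
          _ = K * (R ^ (-r)) ^ (p - 1) := mul_rpow (by positivity) hRr.le
          _ = K * R ^ (-r * (p - 1)) := by rw [← rpow_mul hR0.le]
          _ ≤ K * R ^ (-r) := by
              refine mul_le_mul_of_nonneg_left
                (rpow_le_rpow_of_exponent_le hR.le (by nlinarith)) hK0.le
      exact mul_le_mul_of_nonneg_right h2 (hupos _).le
    have hupA : (∫ x in A, f x) ≤ K * I * R ^ (-r) := by
      calc (∫ x in A, f x) ≤ ∫ x in A, (K * R ^ (-r)) * u (x - z) :=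
            setIntegral_mono_on hfint.integrableOn
              (((hint_u z).const_mul _).integrableOn) hAmeas hup_bound
        _ ≤ ∫ x, (K * R ^ (-r)) * u (x - z) :=
            setIntegral_le_integral ((hint_u z).const_mul _)
              (Filter.Eventually.of_forall fun x =>
                mul_nonneg (mul_nonneg hK0.le hRr.le) (hupos _).le)
        _ = (K * R ^ (-r)) * ∫ x, u (x - z) := integral_const_mul _ _
        _ ≤ (K * R ^ (-r)) * I :=
            mul_le_mul_of_nonneg_left (hIu z) (mul_nonneg hK0.le hRr.le)
        _ = K * I * R ^ (-r) := by ring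
    have hup_boundc : ∀ x ∈ Aᶜ, f x ≤ (C₂ * 2 ^ r * R ^ (-r)) * u (x - y) ^ (p - 1) := by
      intro x hx
      have hx' : ‖x - y‖ < R / 2 := by
        simp only [hA, Set.mem_compl_iff, Set.mem_setOf_eq, not_le] at hx
        exact hx
      have hxz : R / 2 ≤ ‖x - z‖ := by
        have he : z - y = (x - y) - (x - z) := by abel
        have : R ≤ ‖x - y‖ + ‖x - z‖ := by
          calc R = ‖(x - y) - (x - z)‖ := by rw [hRdef, he]
            _ ≤ ‖x - y‖ + ‖x - z‖ := norm_sub_le _ _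
        linarith
      have h1 : u (x - z) ≤ C₂ * 2 ^ r * R ^ (-r) := hdecay _ hxz
      calc f x = u (x - y) ^ (p - 1) * u (x - z) := rfl
        _ ≤ u (x - y) ^ (p - 1) * (C₂ * 2 ^ r * R ^ (-r)) :=
            mul_le_mul_of_nonneg_left h1 (rpow_nonneg (hupos _).le _)
        _ = (C₂ * 2 ^ r * R ^ (-r)) * u (x - y) ^ (p - 1) := mul_comm _ _
    have hcr : (0:ℝ) ≤ C₂ * 2 ^ r * R ^ (-r) :=
      mul_nonneg (mul_nonneg hC2.le (rpow_nonneg (by norm_num) r)) hRr.le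
    have hupAc : (∫ x in Aᶜ, f x) ≤ C₂ * 2 ^ r * J * R ^ (-r) := by
      calc (∫ x in Aᶜ, f x) ≤ ∫ x in Aᶜ, (C₂ * 2 ^ r * R ^ (-r)) * u (x - y) ^ (p - 1) :=
            setIntegral_mono_on hfint.integrableOn
              (((hint_up y).const_mul _).integrableOn) hAmeas.compl hup_boundc
        _ ≤ ∫ x, (C₂ * 2 ^ r * R ^ (-r)) * u (x - y) ^ (p - 1) :=
            setIntegral_le_integral ((hint_up y).const_mul _)
              (Filter.Eventually.of_forall fun x =>
                mul_nonneg hcr (rpow_nonneg (hupos _).le _))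
        _ = (C₂ * 2 ^ r * R ^ (-r)) * ∫ x, u (x - y) ^ (p - 1) := integral_const_mul _ _
        _ ≤ (C₂ * 2 ^ r * R ^ (-r)) * J := mul_le_mul_of_nonneg_left (hJu y) hcr
        _ = C₂ * 2 ^ r * J * R ^ (-r) := by ring
    calc (∫ x, f x) = (∫ x in A, f x) + ∫ x in Aᶜ, f x :=
          (integral_add_compl hAmeas hfint).symm
      _ ≤ K * I * R ^ (-r) + C₂ * 2 ^ r * J * R ^ (-r) := add_le_add hupA hupAc
      _ = (K * I + C₂ * 2 ^ r * J) * R ^ (-r) := by ring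
      _ ≤ (K * I + C₂ * 2 ^ r * J + 1) * R ^ (-r) :=
          mul_le_mul_of_nonneg_right ((le_add_iff_nonneg_right _).mpr zero_le_one) hRr.le
end

section
/- Let u_∞ ∈ H^s(ℝ^N) be positive with decay C₁/(1+|x|^{N+2s}) ≤ u_∞(x) ≤ C₂/(1+|x|^{N+2s}), and let α satisfy N+2s < α < min{2(N+2s), (p/2)(N+2s)} with p > 2. Then there exists a constant C > 0 such that for all y, z ∈ ℝ^N with |y|, |z| ≥ R ≥ 1 and (2/3)R ≤ |y−z| ≤ 2R: ∫_{ℝ^N} (1+|x|)^{-α} [u_∞(x−y)² + u_∞(x−z)²] dx ≤ C R^{N+2s−α} A_{y,z}, where A_{y,z} = ∫ u_∞(x−y)^{p−1} u_∞(x−z) dx. -/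
open Real MeasureTheory

private lemma pow_split {β t : ℝ} (hβ : 0 ≤ β) (ht : 0 ≤ t) :
    (1 + t) ^ β ≤ 2 ^ β * (1 + t ^ β) := by
  rcases le_total t 1 with h | h
  · have h1 : (1 + t) ^ β ≤ 2 ^ β :=
      Real.rpow_le_rpow (by linarith) (by linarith) hβ
    have h2 : (2:ℝ) ^ β ≤ 2 ^ β * (1 + t ^ β) := by
      have ht' : (0:ℝ) ≤ t ^ β := Real.rpow_nonneg ht β
      nlinarith [Real.rpow_pos_of_pos (show (0:ℝ) < 2 by norm_num) β]
    linarith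
  · have h1 : (1 + t) ^ β ≤ (2 * t) ^ β :=
      Real.rpow_le_rpow (by linarith) (by linarith) hβ
    have h2 : ((2:ℝ) * t) ^ β = 2 ^ β * t ^ β := Real.mul_rpow (by norm_num) ht
    have h3 : (2:ℝ) ^ β * t ^ β ≤ 2 ^ β * (1 + t ^ β) := by
      have := Real.rpow_pos_of_pos (show (0:ℝ) < 2 by norm_num) β
      nlinarith
    linarith
 
private lemma decay_upper {β C₂ t : ℝ} (hβ : 0 ≤ β) (ht : 0 ≤ t) (hC : 0 ≤ C₂) :
    C₂ / (1 + t ^ β) ≤ C₂ * 2 ^ β * (1 + t) ^ (-β) := by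
  have hd1 : (0:ℝ) < 1 + t ^ β := by have := Real.rpow_nonneg ht β; linarith
  have hd2 : (0:ℝ) < (1 + t) ^ β := Real.rpow_pos_of_pos (by linarith) β
  rw [Real.rpow_neg (by linarith), ← div_eq_mul_inv]
  rw [div_le_div_iff₀ hd1 hd2]
  calc C₂ * (1 + t) ^ β ≤ C₂ * (2 ^ β * (1 + t ^ β)) := by
        have := pow_split hβ ht
        nlinarith
    _ = C₂ * 2 ^ β * (1 + t ^ β) := by ring

set_option maxHeartbeats 4000000 in
theorem stmt12 (N : ℕ) (hN : 1 ≤ N) (s p α C₁ C₂ : ℝ) (hs0 : 0 < s) (hs1 : s < 1)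
    (hp : 2 < p) (hC1 : 0 < C₁) (hC12 : C₁ < C₂)
    (hα1 : (N : ℝ) + 2 * s < α)
    (hα2 : α < min (2 * ((N : ℝ) + 2 * s)) ((p / 2) * ((N : ℝ) + 2 * s)))
    (u : EuclideanSpace ℝ (Fin N) → ℝ) (hmeas : Measurable u) (hpos : ∀ x, 0 < u x)
    (hlow : ∀ x, C₁ / (1 + ‖x‖ ^ ((N : ℝ) + 2 * s)) ≤ u x)
    (hupp : ∀ x, u x ≤ C₂ / (1 + ‖x‖ ^ ((N : ℝ) + 2 * s))) :
    ∃ C > (0 : ℝ), ∀ R : ℝ, 1 ≤ R → ∀ y z : EuclideanSpace ℝ (Fin N),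
      R ≤ ‖y‖ → R ≤ ‖z‖ → (2 / 3) * R ≤ ‖y - z‖ → ‖y - z‖ ≤ 2 * R →
      (∫ x, (1 + ‖x‖) ^ (-α) * (u (x - y) ^ 2 + u (x - z) ^ 2))
        ≤ C * R ^ ((N : ℝ) + 2 * s - α) * ∫ x, u (x - y) ^ (p - 1) * u (x - z) := by
  set β : ℝ := (N : ℝ) + 2 * s with hβdef
  have hβpos : 0 < β := by positivity
  have hNβ : (N : ℝ) < β := by rw [hβdef]; linarith
  have hNα : (N : ℝ) < α := lt_trans hNβ hα1
  have hα2β : α < 2 * β := lt_of_lt_of_le hα2 (min_le_left _ _)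
  have hαpos : 0 < α := lt_trans (by positivity) hNα
  have hC2 : 0 < C₂ := lt_trans hC1 hC12
  have hrank : (Module.finrank ℝ (EuclideanSpace ℝ (Fin N)) : ℝ) = N := by simp
  -- integrability of the basic kernels
  have intK : ∀ r : ℝ, (N : ℝ) < r →
      Integrable (fun x : EuclideanSpace ℝ (Fin N) => (1 + ‖x‖) ^ (-r)) := by
    intro r hr
    apply integrable_one_add_norm
    rwa [hrank]
  have intα : Integrable (fun x : EuclideanSpace ℝ (Fin N) => (1 + ‖x‖) ^ (-α)) := intK α hNα
  have int2β : Integrable (fun x : EuclideanSpace ℝ (Fin N) => (1 + ‖x‖) ^ (-(2 * β))) :=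
    intK _ (by linarith)
  have intshift : ∀ (r : ℝ), (N : ℝ) < r → ∀ w : EuclideanSpace ℝ (Fin N),
      Integrable (fun x : EuclideanSpace ℝ (Fin N) => (1 + ‖x - w‖) ^ (-r)) := fun r hr w =>
    ((measurePreserving_sub_right volume w).integrable_comp
      (intK r hr).aestronglyMeasurable).mpr (intK r hr)
  set Iα : ℝ := ∫ x : EuclideanSpace ℝ (Fin N), (1 + ‖x‖) ^ (-α) with hIα
  set I2β : ℝ := ∫ x : EuclideanSpace ℝ (Fin N), (1 + ‖x‖) ^ (-(2 * β)) with hI2β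
  have hIα0 : 0 ≤ Iα := integral_nonneg fun x => by positivity
  have hI2β0 : 0 ≤ I2β := integral_nonneg fun x => by positivity
  -- bounds on u
  have hu_le : ∀ x : EuclideanSpace ℝ (Fin N), u x ≤ C₂ * 2 ^ β * (1 + ‖x‖) ^ (-β) := fun x =>
    le_trans (hupp x) (decay_upper hβpos.le (norm_nonneg x) hC2.le)
  have hu_leC : ∀ x : EuclideanSpace ℝ (Fin N), u x ≤ C₂ := fun x => by
    refine le_trans (hupp x) ?_
    have ht : (0:ℝ) ≤ ‖x‖ ^ β := Real.rpow_nonneg (norm_nonneg x) β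
    rw [div_le_iff₀ (by linarith)]
    nlinarith
  -- volume of unit ball
  have hnt : Nontrivial (EuclideanSpace ℝ (Fin N)) := by
    have h0 : 0 < Module.finrank ℝ (EuclideanSpace ℝ (Fin N)) := by
      have : Module.finrank ℝ (EuclideanSpace ℝ (Fin N)) = N := by simp
      omega
    exact Module.nontrivial_of_finrank_pos h0
  set V : ℝ := (volume (Metric.closedBall (0 : EuclideanSpace ℝ (Fin N)) 1)).toReal with hV
  have hVpos : 0 < V := by
    rw [hV]
    apply ENNReal.toReal_pos
    · exact (Metric.measure_closedBall_pos volume (0 : EuclideanSpace ℝ (Fin N)) one_pos).ne'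
    · exact measure_closedBall_lt_top.ne
  -- constants
  set K : ℝ := (C₂ * 2 ^ β) ^ 2 * (2 ^ α * I2β + 2 ^ (2 * β) * Iα) with hK
  have hK0 : 0 ≤ K := by positivity
  set κ : ℝ := (C₁ / 2) ^ (p - 1) * (C₁ / (2 * 3 ^ β)) * V with hκ
  have hκpos : 0 < κ := by positivity
  refine ⟨(2 * K + 1) / κ, div_pos (by linarith) hκpos, ?_⟩
  intro R hR y z hy hz hyz1 hyz2
  have hR0 : (0:ℝ) < R := lt_of_lt_of_le one_pos hR
  -- upper bound for each translated term
  have UP : ∀ w : EuclideanSpace ℝ (Fin N), R ≤ ‖w‖ →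
      (∫ x : EuclideanSpace ℝ (Fin N), (1 + ‖x‖) ^ (-α) * u (x - w) ^ 2) ≤ K * R ^ (-α) := by
    intro w hw
    have hw0 : (0:ℝ) < ‖w‖ := lt_of_lt_of_le hR0 hw
    have hgint : Integrable (fun x : EuclideanSpace ℝ (Fin N) => (C₂ * 2 ^ β) ^ 2 *
      ((1 + ‖w‖ / 2) ^ (-α) * (1 + ‖x - w‖) ^ (-(2 * β)) +
       (1 + ‖w‖ / 2) ^ (-(2 * β)) * (1 + ‖x‖) ^ (-α))) := by
      apply Integrable.const_mul
      exact (((intshift _ (by linarith) w).const_mul _).add (intα.const_mul _))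
    have hpt : ∀ x : EuclideanSpace ℝ (Fin N), (1 + ‖x‖) ^ (-α) * u (x - w) ^ 2 ≤
        (C₂ * 2 ^ β) ^ 2 *
          ((1 + ‖w‖ / 2) ^ (-α) * (1 + ‖x - w‖) ^ (-(2 * β)) +
           (1 + ‖w‖ / 2) ^ (-(2 * β)) * (1 + ‖x‖) ^ (-α)) := by
      intro x
      have hsq : u (x - w) ^ 2 ≤ (C₂ * 2 ^ β) ^ 2 * (1 + ‖x - w‖) ^ (-(2 * β)) := by
        have h1 : u (x - w) ≤ C₂ * 2 ^ β * (1 + ‖x - w‖) ^ (-β) := hu_le _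
        have h2 : u (x - w) ^ 2 ≤ (C₂ * 2 ^ β * (1 + ‖x - w‖) ^ (-β)) ^ 2 := by
          have := (hpos (x - w)).le
          nlinarith
        have h3 : (C₂ * 2 ^ β * (1 + ‖x - w‖) ^ (-β)) ^ 2 =
            (C₂ * 2 ^ β) ^ 2 * (1 + ‖x - w‖) ^ (-(2 * β)) := by
          have hb : (0:ℝ) ≤ 1 + ‖x - w‖ := by positivity
          rw [mul_pow, ← Real.rpow_natCast ((1 + ‖x - w‖) ^ (-β)) 2,
            ← Real.rpow_mul hb]
          congr 1
          push_cast
          ring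
        rw [h3] at h2
        exact h2
      have htri : ‖w‖ ≤ ‖x‖ + ‖x - w‖ := by
        have hxw : w = x - (x - w) := by abel
        calc ‖w‖ = ‖x - (x - w)‖ := by rw [← hxw]
          _ ≤ ‖x‖ + ‖x - w‖ := norm_sub_le _ _
      have hterm2 : (0:ℝ) ≤ (1 + ‖w‖ / 2) ^ (-(2 * β)) * (1 + ‖x‖) ^ (-α) := by positivity
      have hterm1 : (0:ℝ) ≤ (1 + ‖w‖ / 2) ^ (-α) * (1 + ‖x - w‖) ^ (-(2 * β)) := by positivity
      have hC2β : (0:ℝ) < (C₂ * 2 ^ β) ^ 2 := by positivity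
      rcases le_total (‖w‖ / 2) ‖x‖ with hc | hc
      · have hx1 : (1 + ‖x‖) ^ (-α) ≤ (1 + ‖w‖ / 2) ^ (-α) :=
          Real.rpow_le_rpow_of_nonpos (by positivity) (by linarith) (by linarith)
        have hmain : (1 + ‖x‖) ^ (-α) * u (x - w) ^ 2 ≤
            (1 + ‖w‖ / 2) ^ (-α) * ((C₂ * 2 ^ β) ^ 2 * (1 + ‖x - w‖) ^ (-(2 * β))) := by
          have h0 : (0:ℝ) ≤ (1 + ‖x‖) ^ (-α) := by positivity
          calc (1 + ‖x‖) ^ (-α) * u (x - w) ^ 2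
              ≤ (1 + ‖x‖) ^ (-α) * ((C₂ * 2 ^ β) ^ 2 * (1 + ‖x - w‖) ^ (-(2 * β))) :=
                mul_le_mul_of_nonneg_left hsq h0
            _ ≤ (1 + ‖w‖ / 2) ^ (-α) * ((C₂ * 2 ^ β) ^ 2 * (1 + ‖x - w‖) ^ (-(2 * β))) :=
                mul_le_mul_of_nonneg_right hx1 (by positivity)
        nlinarith [hmain, hterm2]
      · have hc' : ‖w‖ / 2 ≤ ‖x - w‖ := by linarith
        have hx1 : (1 + ‖x - w‖) ^ (-(2 * β)) ≤ (1 + ‖w‖ / 2) ^ (-(2 * β)) :=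
          Real.rpow_le_rpow_of_nonpos (by positivity) (by linarith) (by linarith)
        have hmain : (1 + ‖x‖) ^ (-α) * u (x - w) ^ 2 ≤
            (1 + ‖x‖) ^ (-α) * ((C₂ * 2 ^ β) ^ 2 * (1 + ‖w‖ / 2) ^ (-(2 * β))) := by
          have h0 : (0:ℝ) ≤ (1 + ‖x‖) ^ (-α) := by positivity
          calc (1 + ‖x‖) ^ (-α) * u (x - w) ^ 2
              ≤ (1 + ‖x‖) ^ (-α) * ((C₂ * 2 ^ β) ^ 2 * (1 + ‖x - w‖) ^ (-(2 * β))) :=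
                mul_le_mul_of_nonneg_left hsq h0
            _ ≤ (1 + ‖x‖) ^ (-α) * ((C₂ * 2 ^ β) ^ 2 * (1 + ‖w‖ / 2) ^ (-(2 * β))) := by
                apply mul_le_mul_of_nonneg_left _ h0
                exact mul_le_mul_of_nonneg_left hx1 hC2β.le
        nlinarith [hmain, hterm1]
    have hmono : (∫ x : EuclideanSpace ℝ (Fin N), (1 + ‖x‖) ^ (-α) * u (x - w) ^ 2)
        ≤ ∫ x : EuclideanSpace ℝ (Fin N), (C₂ * 2 ^ β) ^ 2 *
          ((1 + ‖w‖ / 2) ^ (-α) * (1 + ‖x - w‖) ^ (-(2 * β)) +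
           (1 + ‖w‖ / 2) ^ (-(2 * β)) * (1 + ‖x‖) ^ (-α)) := by
      apply integral_mono_of_nonneg
      · exact ae_of_all _ fun x => by positivity
      · exact hgint
      · exact ae_of_all _ hpt
    have hgval : (∫ x : EuclideanSpace ℝ (Fin N), (C₂ * 2 ^ β) ^ 2 *
          ((1 + ‖w‖ / 2) ^ (-α) * (1 + ‖x - w‖) ^ (-(2 * β)) +
           (1 + ‖w‖ / 2) ^ (-(2 * β)) * (1 + ‖x‖) ^ (-α))) = (C₂ * 2 ^ β) ^ 2 *
        ((1 + ‖w‖ / 2) ^ (-α) * I2β + (1 + ‖w‖ / 2) ^ (-(2 * β)) * Iα) := by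
      rw [integral_const_mul]
      rw [integral_add ((intshift _ (by linarith) w).const_mul _) (intα.const_mul _)]
      rw [integral_const_mul, integral_const_mul]
      congr 2
      congr 1
      exact integral_sub_right_eq_self (μ := volume)
        (fun x : EuclideanSpace ℝ (Fin N) => (1 + ‖x‖) ^ (-(2 * β))) w
    have hb1 : (1 + ‖w‖ / 2) ^ (-α) ≤ 2 ^ α * R ^ (-α) := by
      have h1 : (1 + ‖w‖ / 2) ^ (-α) ≤ (R / 2) ^ (-α) :=
        Real.rpow_le_rpow_of_nonpos (by positivity) (by linarith) (by linarith)
      have h2 : (R / 2 : ℝ) ^ (-α) = 2 ^ α * R ^ (-α) := by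
        rw [Real.div_rpow hR0.le (by norm_num), Real.rpow_neg hR0.le,
          Real.rpow_neg (by norm_num : (0:ℝ) ≤ 2)]
        have := Real.rpow_pos_of_pos (show (0:ℝ) < 2 by norm_num) α
        field_simp
      rw [h2] at h1
      exact h1
    have hb2 : (1 + ‖w‖ / 2) ^ (-(2 * β)) ≤ 2 ^ (2 * β) * R ^ (-α) := by
      have h1 : (1 + ‖w‖ / 2) ^ (-(2 * β)) ≤ (R / 2) ^ (-(2 * β)) :=
        Real.rpow_le_rpow_of_nonpos (by positivity) (by linarith) (by linarith)
      have h2 : (R / 2 : ℝ) ^ (-(2 * β)) = 2 ^ (2 * β) * R ^ (-(2 * β)) := by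
        rw [Real.div_rpow hR0.le (by norm_num), Real.rpow_neg hR0.le,
          Real.rpow_neg (by norm_num : (0:ℝ) ≤ 2)]
        have := Real.rpow_pos_of_pos (show (0:ℝ) < 2 by norm_num) (2 * β)
        field_simp
      have h3 : R ^ (-(2 * β)) ≤ R ^ (-α) :=
        Real.rpow_le_rpow_of_exponent_le hR (by linarith)
      have h4 : (0:ℝ) < 2 ^ (2 * β) := by positivity
      rw [h2] at h1
      nlinarith
    calc (∫ x : EuclideanSpace ℝ (Fin N), (1 + ‖x‖) ^ (-α) * u (x - w) ^ 2)
        ≤ ∫ x : EuclideanSpace ℝ (Fin N), (C₂ * 2 ^ β) ^ 2 *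
          ((1 + ‖w‖ / 2) ^ (-α) * (1 + ‖x - w‖) ^ (-(2 * β)) +
           (1 + ‖w‖ / 2) ^ (-(2 * β)) * (1 + ‖x‖) ^ (-α)) := hmono
      _ = (C₂ * 2 ^ β) ^ 2 *
          ((1 + ‖w‖ / 2) ^ (-α) * I2β + (1 + ‖w‖ / 2) ^ (-(2 * β)) * Iα) := hgval
      _ ≤ (C₂ * 2 ^ β) ^ 2 *
          ((2 ^ α * R ^ (-α)) * I2β + (2 ^ (2 * β) * R ^ (-α)) * Iα) := by
          refine mul_le_mul_of_nonneg_left (add_le_add ?_ ?_) (sq_nonneg _)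
          · exact mul_le_mul_of_nonneg_right hb1 hI2β0
          · exact mul_le_mul_of_nonneg_right hb2 hIα0
      _ = K * R ^ (-α) := by rw [hK]; ring
  -- lower bound for the interaction term
  have LOW : κ * R ^ (-β) ≤ ∫ x, u (x - y) ^ (p - 1) * u (x - z) := by
    have hFmeas : Measurable (fun x : EuclideanSpace ℝ (Fin N) =>
        u (x - y) ^ (p - 1) * u (x - z)) := by
      fun_prop
    have hFnn : ∀ x : EuclideanSpace ℝ (Fin N), 0 ≤ u (x - y) ^ (p - 1) * u (x - z) := fun x => by
      have h1 := (hpos (x - y)).le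
      have h2 := (hpos (x - z)).le
      positivity
    have hFint : Integrable (fun x : EuclideanSpace ℝ (Fin N) =>
        u (x - y) ^ (p - 1) * u (x - z)) := by
      apply Integrable.mono' (((intshift β hNβ z).const_mul (C₂ ^ (p - 1) * (C₂ * 2 ^ β))))
        hFmeas.aestronglyMeasurable
      refine ae_of_all _ fun x => ?_
      rw [Real.norm_of_nonneg (hFnn x)]
      have h1 : u (x - y) ^ (p - 1) ≤ C₂ ^ (p - 1) :=
        Real.rpow_le_rpow (hpos _).le (hu_leC _) (by linarith)
      have h2 : u (x - z) ≤ C₂ * 2 ^ β * (1 + ‖x - z‖) ^ (-β) := hu_le _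
      calc u (x - y) ^ (p - 1) * u (x - z)
            ≤ C₂ ^ (p - 1) * (C₂ * 2 ^ β * (1 + ‖x - z‖) ^ (-β)) := by
            exact mul_le_mul h1 h2 (hpos _).le (by positivity)
        _ = C₂ ^ (p - 1) * (C₂ * 2 ^ β) * (1 + ‖x - z‖) ^ (-β) := by ring
    set m : ℝ := (C₁ / 2) ^ (p - 1) * (C₁ / (2 * 3 ^ β) * R ^ (-β)) with hm
    have hml : ∀ x ∈ Metric.closedBall y 1, m ≤ u (x - y) ^ (p - 1) * u (x - z) := by
      intro x hx
      rw [Metric.mem_closedBall, dist_eq_norm] at hx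
      have h1 : C₁ / 2 ≤ u (x - y) := by
        refine le_trans ?_ (hlow (x - y))
        have hle1 : ‖x - y‖ ^ β ≤ 1 := Real.rpow_le_one (norm_nonneg _) hx hβpos.le
        gcongr
        linarith
      have h2 : (C₁ / 2) ^ (p - 1) ≤ u (x - y) ^ (p - 1) :=
        Real.rpow_le_rpow (by positivity) h1 (by linarith)
      have h3 : C₁ / (2 * 3 ^ β) * R ^ (-β) ≤ u (x - z) := by
        refine le_trans ?_ (hlow (x - z))
        have hxz : ‖x - z‖ ≤ 3 * R := by
          have hsplit : ‖x - z‖ ≤ ‖x - y‖ + ‖y - z‖ := by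
            have hxyz : x - z = (x - y) + (y - z) := by abel
            rw [hxyz]; exact norm_add_le _ _
          linarith
        have h4 : ‖x - z‖ ^ β ≤ 3 ^ β * R ^ β := by
          calc ‖x - z‖ ^ β ≤ (3 * R) ^ β :=
              Real.rpow_le_rpow (norm_nonneg _) hxz hβpos.le
            _ = 3 ^ β * R ^ β := Real.mul_rpow (by norm_num) hR0.le
        have h5 : (1:ℝ) ≤ 3 ^ β * R ^ β := by
          calc (1:ℝ) ≤ (3 * R) ^ β := Real.one_le_rpow (by linarith) hβpos.le
            _ = 3 ^ β * R ^ β := Real.mul_rpow (by norm_num) hR0.le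
        have heq : C₁ / (2 * 3 ^ β) * R ^ (-β) = C₁ / (2 * 3 ^ β * R ^ β) := by
          rw [Real.rpow_neg hR0.le]
          have hRβ : (0:ℝ) < R ^ β := Real.rpow_pos_of_pos hR0 β
          have h3β : (0:ℝ) < 3 ^ β := Real.rpow_pos_of_pos (by norm_num) β
          field_simp
        rw [heq]
        have ht : (0:ℝ) ≤ ‖x - z‖ ^ β := Real.rpow_nonneg (norm_nonneg _) β
        gcongr
        linarith
      rw [hm]
      exact mul_le_mul h2 h3 (by positivity) (Real.rpow_nonneg (hpos _).le _)
    have hball : m * V ≤ ∫ x in Metric.closedBall y 1, u (x - y) ^ (p - 1) * u (x - z) := by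
      have hres := setIntegral_ge_of_const_le (μ := volume) Metric.isClosed_closedBall.measurableSet
        measure_closedBall_lt_top.ne hml hFint.integrableOn
      have hveq : (volume (Metric.closedBall y 1)).toReal = V := by
        rw [hV, Measure.addHaar_closedBall_center]
      rw [measureReal_def, hveq, smul_eq_mul, mul_comm] at hres
      exact hres
    have hsub : (∫ x in Metric.closedBall y 1, u (x - y) ^ (p - 1) * u (x - z))
        ≤ ∫ x, u (x - y) ^ (p - 1) * u (x - z) :=
      setIntegral_le_integral hFint (ae_of_all _ hFnn)
    have hκm : κ * R ^ (-β) = m * V := by rw [hκ, hm]; ring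
    rw [hκm]
    exact le_trans hball hsub
  -- combine
  have int1 : ∀ w : EuclideanSpace ℝ (Fin N),
      Integrable (fun x : EuclideanSpace ℝ (Fin N) => (1 + ‖x‖) ^ (-α) * u (x - w) ^ 2) := by
    intro w
    apply Integrable.mono' (intα.const_mul (C₂ ^ 2))
    · apply Measurable.aestronglyMeasurable
      fun_prop
    · refine ae_of_all _ fun x => ?_
      have h0 : (0:ℝ) ≤ (1 + ‖x‖) ^ (-α) := by positivity
      have h1 : u (x - w) ^ 2 ≤ C₂ ^ 2 := by
        have := (hpos (x - w)).le; have := hu_leC (x - w); nlinarith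
      rw [Real.norm_of_nonneg (by positivity)]
      calc (1 + ‖x‖) ^ (-α) * u (x - w) ^ 2 ≤ (1 + ‖x‖) ^ (-α) * C₂ ^ 2 :=
          mul_le_mul_of_nonneg_left h1 h0
        _ = C₂ ^ 2 * (1 + ‖x‖) ^ (-α) := by ring
  have hsplit : (∫ x, (1 + ‖x‖) ^ (-α) * (u (x - y) ^ 2 + u (x - z) ^ 2))
      = (∫ x, (1 + ‖x‖) ^ (-α) * u (x - y) ^ 2)
        + ∫ x, (1 + ‖x‖) ^ (-α) * u (x - z) ^ 2 := by
    rw [← integral_add (int1 y) (int1 z)]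
    congr 1
    ext x
    ring
  have hRα : (0:ℝ) ≤ R ^ (-α) := by positivity
  have hfin : R ^ (β - α) * R ^ (-β) = R ^ (-α) := by
    rw [← Real.rpow_add hR0]
    ring_nf
  have hfinal : (2 * K + 1) * R ^ (-α)
      = (2 * K + 1) / κ * R ^ (β - α) * (κ * R ^ (-β)) := by
    have : (2 * K + 1) / κ * R ^ (β - α) * (κ * R ^ (-β))
        = (2 * K + 1) / κ * κ * (R ^ (β - α) * R ^ (-β)) := by ring
    rw [this, hfin, div_mul_cancel₀ _ hκpos.ne']
  calc (∫ x, (1 + ‖x‖) ^ (-α) * (u (x - y) ^ 2 + u (x - z) ^ 2))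
      = (∫ x, (1 + ‖x‖) ^ (-α) * u (x - y) ^ 2)
        + ∫ x, (1 + ‖x‖) ^ (-α) * u (x - z) ^ 2 := hsplit
    _ ≤ K * R ^ (-α) + K * R ^ (-α) := add_le_add (UP y hy) (UP z hz)
    _ ≤ (2 * K + 1) * R ^ (-α) := by nlinarith
    _ = (2 * K + 1) / κ * R ^ (β - α) * (κ * R ^ (-β)) := hfinal
    _ ≤ (2 * K + 1) / κ * R ^ (β - α) * ∫ x, u (x - y) ^ (p - 1) * u (x - z) := by
        have hc : (0:ℝ) ≤ (2 * K + 1) / κ * R ^ (β - α) :=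
          mul_nonneg (div_nonneg (by linarith) hκpos.le) (Real.rpow_nonneg hR0.le _)
        exact mul_le_mul_of_nonneg_left LOW hc
end

section
/- Let g : cl(Ω_R) → ℝ^N be defined on the closed ball Ω_R = B_{(4/3)R}(y/3) ⊂ ℝ^N (with y = (0,…,0,R)) by g(x) = τ(x)·x/|x| for x ≠ 0 and g(0) = 0, where τ(x) = (1/(5R))[√(15|x|² + x_N²) − x_N]. Then g is a continuous map from cl(Ω_R) onto the closed unit ball of ℝ^N, g maps the boundary ∂Ω_R to the unit sphere, and g(z) = z/|z| for z ∈ ∂Ω_R. -/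
open Real Metric Set
open scoped Classical

/-- The radial scaling factor `τ(x) = (1/(5R))(√(15|x|² + x_N²) − x_N)`. -/
noncomputable def tau14 (N : ℕ) (R : ℝ) (x : EuclideanSpace ℝ (Fin (N + 1))) : ℝ :=
  (1 / (5 * R)) * (Real.sqrt (15 * ‖x‖ ^ 2 + (x (Fin.last N)) ^ 2) - x (Fin.last N))

/-- The homothetic contraction `g(x) = τ(x)·x/|x|`, `g(0) = 0`. -/
noncomputable def g14 (N : ℕ) (R : ℝ) (x : EuclideanSpace ℝ (Fin (N + 1))) :
    EuclideanSpace ℝ (Fin (N + 1)) :=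
  if x = 0 then 0 else (tau14 N R x / ‖x‖) • x

section aux
variable {N : ℕ} {R : ℝ}


lemma absN_le (x : EuclideanSpace ℝ (Fin (N+1))) : |x (Fin.last N)| ≤ ‖x‖ := by
  have h := abs_real_inner_le_norm (EuclideanSpace.single (Fin.last N) (1:ℝ)) x
  simpa [EuclideanSpace.inner_single_left, EuclideanSpace.norm_single] using h

lemma sqN_le (x : EuclideanSpace ℝ (Fin (N+1))) : (x (Fin.last N))^2 ≤ ‖x‖^2 := by
  have h := absN_le x
  nlinarith [abs_nonneg (x (Fin.last N)), sq_abs (x (Fin.last N)), norm_nonneg x]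

lemma arg_nonneg (x : EuclideanSpace ℝ (Fin (N+1))) :
    0 ≤ 15 * ‖x‖ ^ 2 + (x (Fin.last N)) ^ 2 := by positivity

lemma sqrt_ge_xN (x : EuclideanSpace ℝ (Fin (N+1))) :
    x (Fin.last N) ≤ Real.sqrt (15 * ‖x‖ ^ 2 + (x (Fin.last N)) ^ 2) := by
  rcases le_or_gt (x (Fin.last N)) 0 with h | h
  · exact h.trans (Real.sqrt_nonneg _)
  · rw [show (15 * ‖x‖ ^ 2 + (x (Fin.last N)) ^ 2) = ‖x‖^2 * 15 + (x (Fin.last N))^2 by ring]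
    calc x (Fin.last N) = Real.sqrt ((x (Fin.last N))^2) := by
          rw [Real.sqrt_sq h.le]
      _ ≤ _ := by
          apply Real.sqrt_le_sqrt; nlinarith [norm_nonneg x]

lemma tau_nonneg (hR : 0 < R) (x : EuclideanSpace ℝ (Fin (N+1))) : 0 ≤ tau14 N R x := by
  have := sqrt_ge_xN x
  have : 0 ≤ Real.sqrt (15 * ‖x‖ ^ 2 + (x (Fin.last N)) ^ 2) - x (Fin.last N) := by linarith
  unfold tau14; positivity

lemma tau_pos (hR : 0 < R) (x : EuclideanSpace ℝ (Fin (N+1))) (hx : x ≠ 0) :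
    0 < tau14 N R x := by
  have hn : 0 < ‖x‖ := norm_pos_iff.2 hx
  have hlt : x (Fin.last N) < Real.sqrt (15 * ‖x‖ ^ 2 + (x (Fin.last N)) ^ 2) := by
    rcases le_or_gt (x (Fin.last N)) 0 with h | h
    · have : (0:ℝ) < Real.sqrt (15 * ‖x‖ ^ 2 + (x (Fin.last N)) ^ 2) := by
        apply Real.sqrt_pos.2; nlinarith
      linarith
    · nth_rewrite 1 [show x (Fin.last N) = Real.sqrt ((x (Fin.last N))^2) by rw [Real.sqrt_sq h.le]]
      apply Real.sqrt_lt_sqrt (by positivity); nlinarith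
  unfold tau14
  have h5 : 0 < 1 / (5*R) := by positivity
  nlinarith

lemma tau_le (hR : 0 < R) (x : EuclideanSpace ℝ (Fin (N+1))) : tau14 N R x ≤ ‖x‖ / R := by
  have h1 : Real.sqrt (15 * ‖x‖ ^ 2 + (x (Fin.last N)) ^ 2) ≤ 4 * ‖x‖ := by
    rw [show (4:ℝ) * ‖x‖ = Real.sqrt ((4*‖x‖)^2) by rw [Real.sqrt_sq (by positivity)]]
    apply Real.sqrt_le_sqrt; nlinarith [sqN_le x]
  have h2 : -‖x‖ ≤ x (Fin.last N) := (abs_le.1 (absN_le x)).1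
  unfold tau14
  have h5 : (0:ℝ) < 1 / (5*R) := by positivity
  have h6 : Real.sqrt (15 * ‖x‖ ^ 2 + (x (Fin.last N)) ^ 2) - x (Fin.last N) ≤ 5 * ‖x‖ := by
    linarith
  have h7 : 1/(5*R) * (Real.sqrt (15 * ‖x‖ ^ 2 + (x (Fin.last N)) ^ 2) - x (Fin.last N))
      ≤ 1/(5*R) * (5*‖x‖) := by nlinarith
  have h8 : 1/(5*R) * (5*‖x‖) = ‖x‖ / R := by field_simp
  linarith



lemma norm_sub_sq14 (hR : 0 < R) (x : EuclideanSpace ℝ (Fin (N+1))) :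
    ‖x - (R/3) • EuclideanSpace.single (Fin.last N) (1:ℝ)‖^2
      = ‖x‖^2 - (2*R/3) * x (Fin.last N) + R^2/9 := by
  rw [norm_sub_sq_real]
  simp [real_inner_smul_right, EuclideanSpace.inner_single_right, norm_smul,
    EuclideanSpace.norm_single, sq_abs, abs_of_pos hR]
  ring

lemma mem_ball_iff14 (hR : 0 < R) (x : EuclideanSpace ℝ (Fin (N+1))) :
    x ∈ closedBall ((R / 3) • EuclideanSpace.single (Fin.last N) (1 : ℝ)) ((4 / 3) * R) ↔
      15 * ‖x‖^2 ≤ 25 * R^2 + 10 * R * x (Fin.last N) := by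
  rw [mem_closedBall, dist_eq_norm]
  constructor
  · intro h
    have h2 : ‖x - (R/3) • EuclideanSpace.single (Fin.last N) (1:ℝ)‖^2 ≤ ((4/3)*R)^2 := by
      nlinarith [norm_nonneg (x - (R/3) • EuclideanSpace.single (Fin.last N) (1:ℝ))]
    rw [norm_sub_sq14 hR] at h2; nlinarith
  · intro h
    have h2 : ‖x - (R/3) • EuclideanSpace.single (Fin.last N) (1:ℝ)‖^2 ≤ ((4/3)*R)^2 := by
      rw [norm_sub_sq14 hR]; nlinarith
    nlinarith [norm_nonneg (x - (R/3) • EuclideanSpace.single (Fin.last N) (1:ℝ))]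

lemma mem_sphere_iff14 (hR : 0 < R) (x : EuclideanSpace ℝ (Fin (N+1))) :
    x ∈ sphere ((R / 3) • EuclideanSpace.single (Fin.last N) (1 : ℝ)) ((4 / 3) * R) ↔
      15 * ‖x‖^2 = 25 * R^2 + 10 * R * x (Fin.last N) := by
  rw [mem_sphere, dist_eq_norm]
  constructor
  · intro h
    have h2 : ‖x - (R/3) • EuclideanSpace.single (Fin.last N) (1:ℝ)‖^2 = ((4/3)*R)^2 := by
      rw [h]
    rw [norm_sub_sq14 hR] at h2; nlinarith
  · intro h
    have h2 : ‖x - (R/3) • EuclideanSpace.single (Fin.last N) (1:ℝ)‖^2 = ((4/3)*R)^2 := by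
      rw [norm_sub_sq14 hR]; nlinarith
    nlinarith [norm_nonneg (x - (R/3) • EuclideanSpace.single (Fin.last N) (1:ℝ))]

lemma tau_le_one_iff (hR : 0 < R) (x : EuclideanSpace ℝ (Fin (N+1))) :
    tau14 N R x ≤ 1 ↔ 15 * ‖x‖^2 ≤ 25 * R^2 + 10 * R * x (Fin.last N) := by
  unfold tau14
  set t := x (Fin.last N)
  set A := 15 * ‖x‖ ^ 2 + t ^ 2 with hA
  have hA0 : 0 ≤ A := by positivity
  constructor
  · intro h
    have h1 : Real.sqrt A ≤ 5*R + t := by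
      by_contra h7
      push_neg at h7
      have h8 : 1 < 1/(5*R) * (Real.sqrt A - t) := by
        rw [div_mul_eq_mul_div, one_mul, lt_div_iff₀ (by positivity)]; linarith
      linarith
    have h2 : A ≤ (5*R+t)^2 := by
      nlinarith [Real.sq_sqrt hA0, Real.sqrt_nonneg A]
    nlinarith
  · intro h
    have ht : 0 ≤ 5*R + t := by nlinarith [sqN_le x]
    have h2 : A ≤ (5*R+t)^2 := by nlinarith
    have h1 : Real.sqrt A ≤ 5*R + t := by
      calc Real.sqrt A ≤ Real.sqrt ((5*R+t)^2) := Real.sqrt_le_sqrt h2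
        _ = 5*R + t := Real.sqrt_sq ht
    have h5 : (0:ℝ) < 1/(5*R) := by positivity
    have : 1/(5*R) * (Real.sqrt A - t) ≤ 1/(5*R) * (5*R) := by nlinarith
    have h6 : 1/(5*R) * (5*R) = 1 := by field_simp
    linarith [h6 ▸ this]

lemma tau_eq_one (hR : 0 < R) (x : EuclideanSpace ℝ (Fin (N+1)))
    (h : 15 * ‖x‖^2 = 25 * R^2 + 10 * R * x (Fin.last N)) : tau14 N R x = 1 := by
  set t := x (Fin.last N)
  have ht : 0 ≤ 5*R + t := by nlinarith [sqN_le x]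
  have h2 : 15 * ‖x‖ ^ 2 + t ^ 2 = (5*R+t)^2 := by nlinarith
  unfold tau14
  rw [h2, Real.sqrt_sq ht]
  field_simp
  simp [t]

lemma tau_smul14 (hR : 0 < R) (c : ℝ) (hc : 0 ≤ c) (x : EuclideanSpace ℝ (Fin (N+1))) :
    tau14 N R (c • x) = c * tau14 N R x := by
  have h1 : (c • x) (Fin.last N) = c * x (Fin.last N) := rfl
  have h2 : ‖c • x‖ = c * ‖x‖ := by rw [norm_smul]; simp [abs_of_nonneg hc]
  unfold tau14
  rw [h1, h2]
  have h3 : 15 * (c*‖x‖) ^ 2 + (c * x (Fin.last N)) ^ 2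
      = c^2 * (15 * ‖x‖ ^ 2 + (x (Fin.last N)) ^ 2) := by ring
  rw [h3, Real.sqrt_mul (sq_nonneg c), Real.sqrt_sq hc]
  ring


lemma norm_g14 (hR : 0 < R) (x : EuclideanSpace ℝ (Fin (N+1))) (hx : x ≠ 0) :
    ‖g14 N R x‖ = tau14 N R x := by
  have hn : 0 < ‖x‖ := norm_pos_iff.2 hx
  rw [g14, if_neg hx, norm_smul, Real.norm_eq_abs, abs_div, abs_of_nonneg (tau_nonneg hR x),
    abs_norm, div_mul_cancel₀ _ hn.ne']

lemma tau_cont : Continuous (tau14 N R) := by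
  have hp : Continuous (fun x : EuclideanSpace ℝ (Fin (N+1)) => x (Fin.last N)) :=
    (EuclideanSpace.proj (Fin.last N) : EuclideanSpace ℝ (Fin (N+1)) →L[ℝ] ℝ).continuous
  unfold tau14
  exact continuous_const.mul ((Real.continuous_sqrt.comp
    ((continuous_const.mul (continuous_norm.pow 2)).add (hp.pow 2))).sub hp)

lemma g_cont (hR : 0 < R) : Continuous (g14 N R) := by
  rw [continuous_iff_continuousAt]
  intro x
  by_cases hx : x = 0
  · subst hx
    have h0 : g14 N R 0 = 0 := if_pos rfl
    unfold ContinuousAt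
    rw [h0]
    have hb : ∀ y : EuclideanSpace ℝ (Fin (N+1)), ‖g14 N R y‖ ≤ ‖y‖ / R := by
      intro y
      by_cases hy : y = 0
      · simp [hy, if_pos, g14]
      · rw [norm_g14 hR y hy]; exact tau_le hR y
    have hg : Filter.Tendsto (fun y : EuclideanSpace ℝ (Fin (N+1)) => ‖y‖ / R)
        (nhds 0) (nhds 0) := by
      have : Continuous (fun y : EuclideanSpace ℝ (Fin (N+1)) => ‖y‖ / R) :=
        continuous_norm.div_const R
      simpa using this.tendsto 0
    exact squeeze_zero_norm hb hg
  · have hev : (fun y => (tau14 N R y / ‖y‖) • y) =ᶠ[nhds x] g14 N R := by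
      filter_upwards [isOpen_compl_singleton.mem_nhds hx] with y hy
      exact (if_neg hy).symm
    have hca : ContinuousAt (fun y => (tau14 N R y / ‖y‖) • y) x := by
      refine ContinuousAt.smul (f := fun y => tau14 N R y / ‖y‖) (g := fun y => y) ?_ continuousAt_id
      exact (tau_cont.continuousAt).div continuous_norm.continuousAt
        (norm_ne_zero_iff.2 hx)
    exact hca.congr hev
end aux

theorem stmt14 (N : ℕ) (R : ℝ) (hR : 0 < R) :
    ContinuousOn (g14 N R)
      (closedBall ((R / 3) • EuclideanSpace.single (Fin.last N) (1 : ℝ)) ((4 / 3) * R)) ∧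
    g14 N R '' (closedBall ((R / 3) • EuclideanSpace.single (Fin.last N) (1 : ℝ)) ((4 / 3) * R))
      = closedBall (0 : EuclideanSpace ℝ (Fin (N + 1))) 1 ∧
    ∀ z ∈ sphere ((R / 3) • EuclideanSpace.single (Fin.last N) (1 : ℝ)) ((4 / 3) * R),
      g14 N R z = ‖z‖⁻¹ • z ∧ ‖g14 N R z‖ = 1 := by
  refine ⟨(g_cont hR).continuousOn, ?_, ?_⟩
  · ext v
    constructor
    · rintro ⟨x, hx, rfl⟩
      rw [mem_closedBall, dist_zero_right]
      by_cases hx0 : x = 0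
      · simp [hx0, g14]
      · rw [norm_g14 hR x hx0]
        exact (tau_le_one_iff hR x).2 ((mem_ball_iff14 hR x).1 hx)
    · intro hv
      rw [mem_closedBall, dist_zero_right] at hv
      by_cases hv0 : v = 0
      · refine ⟨0, ?_, by simp [g14, hv0]⟩
        rw [mem_closedBall, dist_comm, dist_zero_right, norm_smul,
          EuclideanSpace.norm_single, Real.norm_eq_abs,
          abs_of_pos (by positivity : (0:ℝ) < R/3)]
        simp; linarith
      · have htv : 0 < tau14 N R v := tau_pos hR v hv0
        have hnv : 0 < ‖v‖ := norm_pos_iff.2 hv0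
        set c := ‖v‖ / tau14 N R v with hc
        have hc0 : 0 < c := div_pos hnv htv
        have htau : tau14 N R (c • v) = ‖v‖ := by
          rw [tau_smul14 hR c hc0.le, hc]; field_simp
        refine ⟨c • v, ?_, ?_⟩
        · exact (mem_ball_iff14 hR _).2 ((tau_le_one_iff hR _).1 (by rw [htau]; exact hv))
        · have hne : c • v ≠ 0 := smul_ne_zero hc0.ne' hv0
          rw [g14, if_neg hne, htau, norm_smul, Real.norm_eq_abs, abs_of_pos hc0, smul_smul]
          rw [show ‖v‖ / (c * ‖v‖) * c = 1 by field_simp, one_smul]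
  · intro z hz
    have h15 := (mem_sphere_iff14 hR z).1 hz
    have hz0 : z ≠ 0 := by
      intro h
      subst h
      simp at h15
      nlinarith
    have ht1 : tau14 N R z = 1 := tau_eq_one hR z h15
    refine ⟨?_, ?_⟩
    · rw [g14, if_neg hz0, ht1, one_div]
    · rw [norm_g14 hR z hz0, ht1]
end

section
/- Let u_∞ ∈ L^p(ℝ^N), u_∞ ≠ 0, p ≥ 1, and let (x_n) ⊂ ℝ^N with |x_n| → ∞. Then the barycenters of the translates satisfy |β(x_n ∗ u_∞)| → 1 as n → ∞, where (x_n ∗ u_∞)(x) = u_∞(x − x_n) and β(u) = (1/‖u‖_{L^p}^p) ∫ (x/|x|)|u(x)|^p dx. -/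
open Real MeasureTheory Filter

/-- Difference of unit-normalized vectors. -/
lemma unit_vec_diff {E : Type*} [NormedAddCommGroup E] [NormedSpace ℝ E]
    (a b : E) (ha : a ≠ 0) :
    ‖‖a‖⁻¹ • a - ‖b‖⁻¹ • b‖ ≤ 2 * ‖a - b‖ / ‖a‖ := by
  have hna : (0:ℝ) < ‖a‖ := norm_pos_iff.mpr ha
  have key : ‖a‖⁻¹ • a - ‖b‖⁻¹ • b = ‖a‖⁻¹ • (a - b) + (‖a‖⁻¹ - ‖b‖⁻¹) • b := by
    simp only [smul_sub, sub_smul]; abel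
  rw [key]
  have h1 : ‖‖a‖⁻¹ • (a - b)‖ = ‖a - b‖ / ‖a‖ := by
    rw [norm_smul, norm_inv, norm_norm, div_eq_inv_mul]
  have h2 : ‖(‖a‖⁻¹ - ‖b‖⁻¹) • b‖ ≤ ‖a - b‖ / ‖a‖ := by
    rcases eq_or_ne b 0 with hb | hb
    · simp [hb]; positivity
    · have hnb : (0:ℝ) < ‖b‖ := norm_pos_iff.mpr hb
      rw [norm_smul, Real.norm_eq_abs]
      have : |‖a‖⁻¹ - ‖b‖⁻¹| = |‖b‖ - ‖a‖| / (‖a‖ * ‖b‖) := by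
        rw [inv_sub_inv hna.ne' hnb.ne', abs_div, abs_of_pos (mul_pos hna hnb)]
      rw [this]
      have hle : |‖b‖ - ‖a‖| ≤ ‖a - b‖ := by
        rw [abs_sub_comm]; exact abs_norm_sub_norm_le a b
      calc |‖b‖ - ‖a‖| / (‖a‖ * ‖b‖) * ‖b‖ = |‖b‖ - ‖a‖| / ‖a‖ := by
            field_simp
        _ ≤ ‖a - b‖ / ‖a‖ := by gcongr
  calc ‖‖a‖⁻¹ • (a - b) + (‖a‖⁻¹ - ‖b‖⁻¹) • b‖
      ≤ ‖‖a‖⁻¹ • (a - b)‖ + ‖(‖a‖⁻¹ - ‖b‖⁻¹) • b‖ := norm_add_le _ _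
    _ ≤ ‖a - b‖ / ‖a‖ + ‖a - b‖ / ‖a‖ := by rw [h1]; gcongr
    _ = 2 * ‖a - b‖ / ‖a‖ := by ring

theorem stmt16 (N : ℕ) (hN : 1 ≤ N) (p : ℝ) (hp : 1 ≤ p)
    (u : EuclideanSpace ℝ (Fin N) → ℝ)
    (hu : MemLp u (ENNReal.ofReal p) volume)
    (hu0 : ¬ u =ᵐ[volume] 0)
    (x : ℕ → EuclideanSpace ℝ (Fin N))
    (hx : Tendsto (fun n => ‖x n‖) atTop atTop) :
    Tendsto (fun n =>
        ‖(∫ z, |u (z - x n)| ^ p)⁻¹ •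
            ∫ z : EuclideanSpace ℝ (Fin N), (|u (z - x n)| ^ p) • (‖z‖⁻¹ • z)‖)
      atTop (nhds 1) := by
  have hp0 : p ≠ 0 := by positivity
  -- integrability of |u|^p
  have hint : Integrable (fun z => |u z| ^ p) volume := by
    have h := hu.integrable_norm_rpow (by simp; linarith) (by simp)
    simpa [Real.norm_eq_abs, ENNReal.toReal_ofReal (by linarith : (0:ℝ) ≤ p)] using h
  set M := ∫ z, |u z| ^ p with hM
  have hMpos : 0 < M := by
    rw [hM, integral_pos_iff_support_of_nonneg
      (fun z => rpow_nonneg (abs_nonneg _) p) hint]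
    have hsupp : Function.support (fun z => |u z| ^ p) = Function.support u := by
      ext z
      simp [Function.mem_support, rpow_eq_zero_iff_of_nonneg (abs_nonneg _), hp0,
        abs_eq_zero]
    rw [hsupp, pos_iff_ne_zero]
    intro h0
    apply hu0
    rw [Filter.EventuallyEq, ae_iff]
    simpa [Function.support] using h0
  -- the translated scalar integral equals M
  have hA : ∀ n, (∫ z, |u (z - x n)| ^ p) = M :=
    fun n => integral_sub_right_eq_self (fun z => |u z| ^ p) (x n)
  -- direction vectors
  set e : ℕ → EuclideanSpace ℝ (Fin N) := fun n => ‖x n‖⁻¹ • x n with he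
  set v : ℕ → EuclideanSpace ℝ (Fin N) → EuclideanSpace ℝ (Fin N) :=
    fun n y => ‖y + x n‖⁻¹ • (y + x n) with hv
  -- change of variables in the vector integral
  have hB : ∀ n, (∫ z, (|u (z - x n)| ^ p) • (‖z‖⁻¹ • z)) =
      ∫ y, (|u y| ^ p) • v n y := by
    intro n
    rw [← integral_add_right_eq_self
      (fun z => (|u (z - x n)| ^ p) • (‖z‖⁻¹ • z)) (x n)]
    simp [hv]
  have hvmeas : ∀ n, Measurable (v n) := by
    intro n
    exact ((measurable_norm.comp (measurable_id.add_const (x n))).inv).smul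
      (measurable_id.add_const (x n))
  have hgm : AEStronglyMeasurable (fun y => |u y| ^ p) volume := hint.1
  have hvle : ∀ n y, ‖v n y‖ ≤ 1 := by
    intro n y
    rcases eq_or_ne (y + x n) 0 with h | h
    · simp [hv, h]
    · rw [hv]
      simp only
      rw [norm_smul, norm_inv, norm_norm, inv_mul_cancel₀ (norm_ne_zero_iff.mpr h)]
  have hele : ∀ n, ‖e n‖ ≤ 1 := by
    intro n
    rcases eq_or_ne (x n) 0 with h | h
    · simp [he, h]
    · rw [he]
      simp only
      rw [norm_smul, norm_inv, norm_norm, inv_mul_cancel₀ (norm_ne_zero_iff.mpr h)]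
  have hfint : ∀ n, Integrable (fun y => (|u y| ^ p) • v n y) volume := by
    intro n
    refine hint.mono' (hgm.smul (hvmeas n).aestronglyMeasurable) ?_
    filter_upwards with y
    rw [norm_smul, Real.norm_eq_abs, abs_of_nonneg (rpow_nonneg (abs_nonneg _) p)]
    calc |u y| ^ p * ‖v n y‖ ≤ |u y| ^ p * 1 :=
          mul_le_mul_of_nonneg_left (hvle n y) (rpow_nonneg (abs_nonneg _) p)
      _ = |u y| ^ p := mul_one _
  have hFm : ∀ n, AEStronglyMeasurable (fun y => (|u y| ^ p) * ‖v n y - e n‖) volume :=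
    fun n => hgm.mul ((hvmeas n).sub measurable_const).norm.aestronglyMeasurable
  have hdle : ∀ n y, ‖v n y - e n‖ ≤ 2 := by
    intro n y
    calc ‖v n y - e n‖ ≤ ‖v n y‖ + ‖e n‖ := norm_sub_le _ _
      _ ≤ 1 + 1 := add_le_add (hvle n y) (hele n)
      _ = 2 := by norm_num
  -- dominated convergence
  have hT : Tendsto (fun n => ∫ y, (|u y| ^ p) * ‖v n y - e n‖) atTop (nhds 0) := by
    have h0 : (0:ℝ) = ∫ (_ : EuclideanSpace ℝ (Fin N)), (0:ℝ) := by simp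
    rw [h0]
    refine tendsto_integral_of_dominated_convergence (fun y => 2 * (|u y| ^ p))
      hFm (hint.const_mul 2) ?_ ?_
    · intro n
      filter_upwards with y
      rw [Real.norm_eq_abs, abs_of_nonneg
        (mul_nonneg (rpow_nonneg (abs_nonneg _) p) (norm_nonneg _))]
      calc |u y| ^ p * ‖v n y - e n‖ ≤ |u y| ^ p * 2 :=
            mul_le_mul_of_nonneg_left (hdle n y) (rpow_nonneg (abs_nonneg _) p)
        _ = 2 * |u y| ^ p := mul_comm _ _
    · filter_upwards with y
      have h1 : Tendsto (fun n => (|u y| ^ p * (4 * ‖y‖)) * ‖x n‖⁻¹) atTop (nhds 0) := by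
        have := (tendsto_inv_atTop_zero.comp hx).const_mul (|u y| ^ p * (4 * ‖y‖))
        simpa using this
      refine squeeze_zero' ?_ ?_ h1
      · filter_upwards with n
        exact mul_nonneg (rpow_nonneg (abs_nonneg _) p) (norm_nonneg _)
      · have hev : ∀ᶠ n in atTop, 2 * ‖y‖ + 1 ≤ ‖x n‖ := hx.eventually_ge_atTop _
        filter_upwards [hev] with n hn
        have hxa : (0:ℝ) < ‖x n‖ := lt_of_lt_of_le (by positivity) hn
        have hyx : y + x n ≠ 0 := by
          intro h
          have hxy : x n = -y := by linear_combination (norm := abel_nf) h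
          rw [hxy, norm_neg] at hn
          nlinarith [norm_nonneg y]
        have hna : ‖x n‖ / 2 ≤ ‖y + x n‖ := by
          have htri : ‖x n‖ - ‖y‖ ≤ ‖y + x n‖ := by
            have := norm_add_le (-y) (y + x n)
            simp only [norm_neg] at this
            have h2 : -y + (y + x n) = x n := by abel
            rw [h2] at this
            linarith
          linarith
        have h2 := unit_vec_diff (y + x n) (x n) hyx
        have h3 : (y + x n) - x n = y := by abel
        rw [h3] at h2
        have h4 : 2 * ‖y‖ / ‖y + x n‖ ≤ 4 * ‖y‖ * ‖x n‖⁻¹ := by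
          rw [div_le_iff₀ (lt_of_lt_of_le (by positivity) hna)]
          have : 4 * ‖y‖ * ‖x n‖⁻¹ * (‖x n‖ / 2) = 2 * ‖y‖ := by
            field_simp; ring
          calc 2 * ‖y‖ = 4 * ‖y‖ * ‖x n‖⁻¹ * (‖x n‖ / 2) := this.symm
            _ ≤ 4 * ‖y‖ * ‖x n‖⁻¹ * ‖y + x n‖ := by gcongr
        calc |u y| ^ p * ‖v n y - e n‖ ≤ |u y| ^ p * (4 * ‖y‖ * ‖x n‖⁻¹) :=
              mul_le_mul_of_nonneg_left (h2.trans h4) (rpow_nonneg (abs_nonneg _) p)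
          _ = |u y| ^ p * (4 * ‖y‖) * ‖x n‖⁻¹ := by ring
  -- integrability of the scalar difference integrand
  have hFint : ∀ n, Integrable (fun y => (|u y| ^ p) * ‖v n y - e n‖) volume := by
    intro n
    refine (hint.const_mul 2).mono' (hFm n) ?_
    filter_upwards with y
    rw [Real.norm_eq_abs, abs_of_nonneg
      (mul_nonneg (rpow_nonneg (abs_nonneg _) p) (norm_nonneg _))]
    calc |u y| ^ p * ‖v n y - e n‖ ≤ |u y| ^ p * 2 :=
          mul_le_mul_of_nonneg_left (hdle n y) (rpow_nonneg (abs_nonneg _) p)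
      _ = 2 * |u y| ^ p := mul_comm _ _
  -- the vector integral is close to M • e n
  have hIe : Tendsto (fun n => ‖(∫ y, (|u y| ^ p) • v n y) - M • e n‖) atTop (nhds 0) := by
    refine squeeze_zero (fun n => norm_nonneg _) (fun n => ?_) hT
    have hrw : (∫ y, (|u y| ^ p) • v n y) - M • e n
        = ∫ y, (|u y| ^ p) • (v n y - e n) := by
      have h1 : (∫ y, (|u y| ^ p) • (v n y - e n))
          = (∫ y, (|u y| ^ p) • v n y) - ∫ y, (|u y| ^ p) • e n := by
        simp only [smul_sub]
        exact integral_sub (hfint n) (hint.smul_const (e n))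
      rw [h1, integral_smul_const]
    rw [hrw]
    refine norm_integral_le_of_norm_le (hFint n) ?_
    filter_upwards with y
    rw [norm_smul, Real.norm_eq_abs, abs_of_nonneg (rpow_nonneg (abs_nonneg _) p)]
  -- hence the norm of the vector integral tends to M
  have hInorm : Tendsto (fun n => ‖∫ y, (|u y| ^ p) • v n y‖) atTop (nhds M) := by
    rw [tendsto_iff_norm_sub_tendsto_zero]
    refine squeeze_zero' ?_ ?_ hIe
    · filter_upwards with n; exact norm_nonneg _
    · have hev : ∀ᶠ n in atTop, 1 ≤ ‖x n‖ := hx.eventually_ge_atTop 1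
      filter_upwards [hev] with n hn
      have hxn : x n ≠ 0 := by
        intro h; rw [h, norm_zero] at hn; linarith
      have hen : ‖e n‖ = 1 := by
        rw [he]; simp only
        rw [norm_smul, norm_inv, norm_norm,
          inv_mul_cancel₀ (norm_ne_zero_iff.mpr hxn)]
      have hMe : ‖M • e n‖ = M := by
        rw [norm_smul, Real.norm_eq_abs, abs_of_pos hMpos, hen, mul_one]
      calc ‖‖∫ y, (|u y| ^ p) • v n y‖ - M‖
          = |‖∫ y, (|u y| ^ p) • v n y‖ - ‖M • e n‖| := by
            rw [hMe, Real.norm_eq_abs]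
        _ ≤ ‖(∫ y, (|u y| ^ p) • v n y) - M • e n‖ :=
            abs_norm_sub_norm_le _ _
  -- conclude
  have hfinal : Tendsto (fun n => M⁻¹ * ‖∫ y, (|u y| ^ p) • v n y‖) atTop (nhds 1) := by
    have h := hInorm.const_mul M⁻¹
    rwa [inv_mul_cancel₀ hMpos.ne'] at h
  refine hfinal.congr fun n => ?_
  rw [hA n, hB n, norm_smul, Real.norm_eq_abs, abs_of_pos (inv_pos.mpr hMpos)]
end

section
/- Let p > 2 and δ₀ ∈ (0, ½). Then there exists ε > 0 such that for all λ ∈ [δ₀, 1 − δ₀] and all t > 0 with |t^{2−p} − ((1−λ)^p + λ^p)/((1−λ)² + λ²)| ≤ ε: (1−λ)^{p−2} + λ^{p−2} − t^{2−p} ≥ δ₀^p. -/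
open Real Set

theorem stmt19 (p : ℝ) (hp : 2 < p) (δ₀ : ℝ) (hδ0 : 0 < δ₀) (hδhalf : δ₀ < 1 / 2) :
    ∃ ε > (0 : ℝ), ∀ l ∈ Icc δ₀ (1 - δ₀), ∀ t : ℝ, 0 < t →
      |t ^ (2 - p) - ((1 - l) ^ p + l ^ p) / ((1 - l) ^ 2 + l ^ 2)| ≤ ε →
      δ₀ ^ p ≤ (1 - l) ^ (p - 2) + l ^ (p - 2) - t ^ (2 - p) := by
  refine ⟨δ₀ ^ p, Real.rpow_pos_of_pos hδ0 p, ?_⟩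
  intro l hl t ht habs
  obtain ⟨hlb, hub⟩ := hl
  have ha : δ₀ ≤ 1 - l := by linarith
  have hapos : (0:ℝ) < 1 - l := lt_of_lt_of_le hδ0 ha
  have hbpos : (0:ℝ) < l := lt_of_lt_of_le hδ0 hlb
  have hp2 : (0:ℝ) ≤ p - 2 := by linarith
  have hA : δ₀ ^ (p - 2) ≤ (1 - l) ^ (p - 2) :=
    Real.rpow_le_rpow hδ0.le ha hp2
  have hB : δ₀ ^ (p - 2) ≤ l ^ (p - 2) :=
    Real.rpow_le_rpow hδ0.le hlb hp2
  have hEpos : (0:ℝ) < δ₀ ^ (p - 2) := Real.rpow_pos_of_pos hδ0 _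
  have split : ∀ x : ℝ, 0 < x → x ^ p = x ^ (p - 2) * x ^ 2 := by
    intro x hx
    rw [← Real.rpow_natCast x 2, ← Real.rpow_add hx]
    norm_num
  have hap : (1 - l) ^ p = (1 - l) ^ (p - 2) * (1 - l) ^ 2 := split _ hapos
  have hbp : l ^ p = l ^ (p - 2) * l ^ 2 := split _ hbpos
  have hEp : δ₀ ^ p = δ₀ ^ (p - 2) * δ₀ ^ 2 := split _ hδ0
  have hD : (0:ℝ) < (1 - l) ^ 2 + l ^ 2 := by positivity
  have hD1 : (1 - l) ^ 2 + l ^ 2 ≤ 1 := by nlinarith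
  have ht2 : t ^ (2 - p) ≤ ((1 - l) ^ p + l ^ p) / ((1 - l) ^ 2 + l ^ 2) + δ₀ ^ p := by
    have := (abs_le.mp habs).2
    linarith
  have key : ((1 - l) ^ p + l ^ p) / ((1 - l) ^ 2 + l ^ 2) ≤
      (1 - l) ^ (p - 2) + l ^ (p - 2) - 2 * δ₀ ^ p := by
    rw [div_le_iff₀ hD]
    have hAb2 : δ₀ ^ (p - 2) * δ₀ ^ 2 ≤ (1 - l) ^ (p - 2) * l ^ 2 := by
      have : δ₀ ^ 2 ≤ l ^ 2 := by nlinarith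
      nlinarith
    have hBa2 : δ₀ ^ (p - 2) * δ₀ ^ 2 ≤ l ^ (p - 2) * (1 - l) ^ 2 := by
      have : δ₀ ^ 2 ≤ (1 - l) ^ 2 := by nlinarith
      nlinarith
    have hE0 : (0:ℝ) < δ₀ ^ p := Real.rpow_pos_of_pos hδ0 p
    nlinarith [hE0, hD1, hAb2, hBa2]
  linarith
end
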